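/- arXiv:1111.7038 — 3 statements merged into one kernel-verified Lean document; each statement's English description precedes it below -/
import Mathlib

section
/- For an even probability measure μ with infinite support on [-L,L] and x_n := μ_{2n}/μ_{2n-2}, the inequality x_{n+3}(x_{n+4} - x_{n+2}) + x_{n+1}(x_{n+2} - x_{n+1}) > x_{n+2}(x_{n+3} - x_{n+2}) + 2 x_{n+1}(x_{n+3} - x_{n+2}) holds for all n ≥ 0. -/
open MeasureTheory

private lemma alg_key (m0 m1 m2 m3 m4 a b : ℝ)
    (h0 : 0 < m0) (h1 : 0 < m1) (h2 : 0 < m2) (h3 : 0 < m3)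
    (ha : a = m1 / m0) (hb : b = m2 / m1)
    (hI : 0 < m4 - 2*(a+b)*m3 + (a^2+4*a*b+b^2)*m2 - 2*a*b*(a+b)*m1 + a^2*b^2*m0) :
    m3/m2 * (m4/m3 - m2/m1) + m1/m0 * (m2/m1 - m1/m0)
      > m2/m1 * (m3/m2 - m2/m1) + 2 * (m1/m0) * (m3/m2 - m2/m1) := by
  rw [gt_iff_lt, ← sub_pos]
  have key : m3/m2 * (m4/m3 - m2/m1) + m1/m0 * (m2/m1 - m1/m0)
      - (m2/m1 * (m3/m2 - m2/m1) + 2 * (m1/m0) * (m3/m2 - m2/m1))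
      = (m4 - 2*(a+b)*m3 + (a^2+4*a*b+b^2)*m2 - 2*a*b*(a+b)*m1 + a^2*b^2*m0) / m2 := by
    subst ha hb
    field_simp
    ring
  rw [key]
  exact div_pos hI h2

/-- The nonlinear inequality
x_{n+3}(x_{n+4}-x_{n+2}) + x_{n+1}(x_{n+2}-x_{n+1})
  > x_{n+2}(x_{n+3}-x_{n+2}) + 2x_{n+1}(x_{n+3}-x_{n+2})
for the moment ratios of an even probability measure with infinite support. -/
theorem moment_ratio_nonlinear_inequality
    (μ : Measure ℝ) [IsProbabilityMeasure μ]
    (heven : Measure.map (fun t : ℝ => -t) μ = μ)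
    (hinf : ∀ s : Finset ℝ, μ ((s : Set ℝ))ᶜ ≠ 0)
    (hint : ∀ n : ℕ, Integrable (fun t : ℝ => t ^ (2 * n)) μ)
    (M : ℕ → ℝ) (hM : ∀ n : ℕ, M n = ∫ t : ℝ, t ^ (2 * n) ∂μ)
    (x : ℕ → ℝ) (hx : ∀ n : ℕ, 1 ≤ n → x n = M n / M (n - 1)) :
    ∀ n : ℕ, x (n+3) * (x (n+4) - x (n+2)) + x (n+1) * (x (n+2) - x (n+1))
      > x (n+2) * (x (n+3) - x (n+2)) + 2 * x (n+1) * (x (n+3) - x (n+2)) := by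
  -- positivity of all even moments
  have hMpos : ∀ k : ℕ, 0 < M k := by
    intro k
    rw [hM k]
    rw [integral_pos_iff_support_of_nonneg
      (fun t => by rw [pow_mul]; positivity) (hint k)]
    have hsub : ((({0} : Finset ℝ) : Set ℝ))ᶜ ⊆ Function.support fun t : ℝ => t ^ (2 * k) := by
      intro t ht
      simp only [Finset.coe_singleton, Set.mem_compl_iff, Set.mem_singleton_iff] at ht
      exact pow_ne_zero _ ht
    have hle := measure_mono (μ := μ) hsub
    exact lt_of_lt_of_le (lt_of_le_of_ne zero_le (Ne.symm (hinf ({0} : Finset ℝ)))) hle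
  intro n
  set a : ℝ := M (n+1) / M n with ha
  set b : ℝ := M (n+2) / M (n+1) with hb
  -- the key integral positivity
  have hgeq : (fun t : ℝ => t ^ (2*n) * ((t^2 - a) * (t^2 - b))^2)
      = fun t : ℝ => t ^ (2*(n+4)) + (-(2*(a+b))) * t ^ (2*(n+3))
        + (a^2+4*a*b+b^2) * t ^ (2*(n+2)) + (-(2*a*b*(a+b))) * t ^ (2*(n+1))
        + (a^2*b^2) * t ^ (2*n) := by
    funext t
    ring
  have hgint : Integrable (fun t : ℝ => t ^ (2*n) * ((t^2 - a) * (t^2 - b))^2) μ := by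
    rw [hgeq]
    exact ((((hint (n+4)).add ((hint (n+3)).const_mul _)).add
      ((hint (n+2)).const_mul _)).add ((hint (n+1)).const_mul _)).add ((hint n).const_mul _)
  have hIpos : 0 < ∫ t : ℝ, t ^ (2*n) * ((t^2 - a) * (t^2 - b))^2 ∂μ := by
    rw [integral_pos_iff_support_of_nonneg (fun t => by rw [pow_mul]; positivity) hgint]
    set s : Finset ℝ := {0, Real.sqrt a, -Real.sqrt a, Real.sqrt b, -Real.sqrt b} with hs
    have hsub : ((s : Set ℝ))ᶜ ⊆ Function.support
        fun t : ℝ => t ^ (2*n) * ((t^2 - a) * (t^2 - b))^2 := by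
      intro t ht
      simp only [hs, Finset.coe_insert, Finset.coe_singleton, Set.mem_compl_iff,
        Set.mem_insert_iff, Set.mem_singleton_iff, not_or] at ht
      obtain ⟨ht0, hta1, hta2, htb1, htb2⟩ := ht
      have h2a : t^2 ≠ a := by
        intro h
        have : Real.sqrt a = |t| := by rw [← h, Real.sqrt_sq_eq_abs]
        rcases abs_cases t with ⟨h', _⟩ | ⟨h', _⟩
        · exact hta1 (by rw [this, h'])
        · exact hta2 (by rw [this, h']; ring)
      have h2b : t^2 ≠ b := by
        intro h
        have : Real.sqrt b = |t| := by rw [← h, Real.sqrt_sq_eq_abs]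
        rcases abs_cases t with ⟨h', _⟩ | ⟨h', _⟩
        · exact htb1 (by rw [this, h'])
        · exact htb2 (by rw [this, h']; ring)
      have : t ^ (2*n) * ((t^2 - a) * (t^2 - b))^2 ≠ 0 := by
        apply mul_ne_zero (pow_ne_zero _ ht0)
        exact pow_ne_zero _ (mul_ne_zero (sub_ne_zero.mpr h2a) (sub_ne_zero.mpr h2b))
      exact this
    exact lt_of_lt_of_le (lt_of_le_of_ne zero_le (Ne.symm (hinf s))) (measure_mono hsub)
  -- express the integral via moments
  have hIval : (∫ t : ℝ, t ^ (2*n) * ((t^2 - a) * (t^2 - b))^2 ∂μ)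
      = M (n+4) - 2*(a+b)*M (n+3) + (a^2+4*a*b+b^2)*M (n+2)
        - 2*a*b*(a+b)*M (n+1) + a^2*b^2*M n := by
    have i4 : Integrable (fun t : ℝ => t ^ (2*(n+4))) μ := hint (n+4)
    have i3 : Integrable (fun t : ℝ => (-(2*(a+b))) * t ^ (2*(n+3))) μ :=
      (hint (n+3)).const_mul _
    have i2 : Integrable (fun t : ℝ => (a^2+4*a*b+b^2) * t ^ (2*(n+2))) μ :=
      (hint (n+2)).const_mul _
    have i1 : Integrable (fun t : ℝ => (-(2*a*b*(a+b))) * t ^ (2*(n+1))) μ :=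
      (hint (n+1)).const_mul _
    have i0 : Integrable (fun t : ℝ => (a^2*b^2) * t ^ (2*n)) μ := (hint n).const_mul _
    have i43 : Integrable (fun t : ℝ => t ^ (2*(n+4)) + (-(2*(a+b))) * t ^ (2*(n+3))) μ :=
      i4.add i3
    have i432 : Integrable (fun t : ℝ => t ^ (2*(n+4)) + (-(2*(a+b))) * t ^ (2*(n+3))
        + (a^2+4*a*b+b^2) * t ^ (2*(n+2))) μ := i43.add i2
    have i4321 : Integrable (fun t : ℝ => t ^ (2*(n+4)) + (-(2*(a+b))) * t ^ (2*(n+3))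
        + (a^2+4*a*b+b^2) * t ^ (2*(n+2)) + (-(2*a*b*(a+b))) * t ^ (2*(n+1))) μ := i432.add i1
    rw [hgeq, integral_add i4321 i0, integral_add i432 i1, integral_add i43 i2,
      integral_add i4 i3, integral_const_mul _ _, integral_const_mul _ _, integral_const_mul _ _,
      integral_const_mul _ _]
    rw [hM (n+4), hM (n+3), hM (n+2), hM (n+1), hM n]
    ring
  rw [hIval] at hIpos
  have hx1 : x (n+1) = M (n+1) / M n := by simpa using hx (n+1) (by omega)
  have hx2 : x (n+2) = M (n+2) / M (n+1) := by simpa using hx (n+2) (by omega)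
  have hx3 : x (n+3) = M (n+3) / M (n+2) := by simpa using hx (n+3) (by omega)
  have hx4 : x (n+4) = M (n+4) / M (n+3) := by simpa using hx (n+4) (by omega)
  rw [hx1, hx2, hx3, hx4]
  exact alg_key (M n) (M (n+1)) (M (n+2)) (M (n+3)) (M (n+4)) a b
    (hMpos n) (hMpos (n+1)) (hMpos (n+2)) (hMpos (n+3)) ha hb hIpos
end

section
/- For the weight w(t) = C e^{-t²} K_ν(t²) |t|^{2μ-1} on ℝ with μ ± ν > 0 and suitable normalization constant C = Γ(μ+1/2) 2^μ / (√π Γ(μ+ν) Γ(μ-ν)), the even moments are μ_{2n} = (μ+ν)_n (μ-ν)_n / (2^n (μ+1/2)_n), hence x_n = (μ+ν+n-1)(μ-ν+n-1) / (2(μ+n-1/2)). -/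
open MeasureTheory Real

/-- The modified Bessel function of the second kind, via its standard integral
representation K_ν(x) = ∫₀^∞ e^{-x cosh t} cosh(νt) dt (x > 0). -/
noncomputable def besselK (ν x : ℝ) : ℝ :=
  ∫ t in Set.Ioi (0:ℝ), Real.exp (-x * Real.cosh t) * Real.cosh (ν * t)

open Set

lemma poch_gamma (x : ℝ) (hx : 0 < x) (n : ℕ) :
    Real.Gamma (x + n) = Real.Gamma x * (ascPochhammer ℝ n).eval x := by
  induction n with
  | zero => simp
  | succ n ih =>
    have h : x + ((n:ℕ)+1 : ℕ) = (x + n) + 1 := by push_cast; ring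
    rw [h, Real.Gamma_add_one (by positivity), ih, ascPochhammer_succ_right]
    simp [Polynomial.eval_mul]
    push_cast
    ring

lemma poch_pos (x : ℝ) (hx : 0 < x) (n : ℕ) : 0 < (ascPochhammer ℝ n).eval x := by
  induction n with
  | zero => simp
  | succ n ih =>
    rw [ascPochhammer_succ_right]
    simp only [Polynomial.eval_mul, Polynomial.eval_add, Polynomial.eval_X,
      Polynomial.eval_natCast]
    positivity


lemma betaReal (p q : ℝ) (hp : 0 < p) (hq : 0 < q) :
    IntegrableOn (fun x : ℝ => x ^ (p-1) * (1-x) ^ (q-1)) (Ioo (0:ℝ) 1) ∧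
    ∫ x in Ioo (0:ℝ) 1, x ^ (p-1) * (1-x) ^ (q-1)
      = Real.Gamma p * Real.Gamma q / Real.Gamma (p+q) := by
  have hc : ∀ x ∈ Ioo (0:ℝ) 1, ((x ^ (p-1) * (1-x) ^ (q-1) : ℝ) : ℂ)
      = (x:ℂ) ^ ((p:ℂ)-1) * (1-(x:ℂ)) ^ ((q:ℂ)-1) := by
    intro x hx
    rw [Complex.ofReal_mul, Complex.ofReal_cpow hx.1.le,
      Complex.ofReal_cpow (by linarith [hx.2] : (0:ℝ) ≤ 1 - x)]
    push_cast
    ring_nf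
  have hF : IntegrableOn (fun x : ℝ => (x:ℂ) ^ ((p:ℂ)-1) * (1-(x:ℂ)) ^ ((q:ℂ)-1))
      (Ioo (0:ℝ) 1) := by
    have := (Complex.betaIntegral_convergent (u := p) (v := q) (by simpa using hp)
      (by simpa using hq))
    exact ((intervalIntegrable_iff_integrableOn_Ioc_of_le zero_le_one).mp this).mono_set
      Ioo_subset_Ioc_self
  have heq : (fun x : ℝ => x ^ (p-1) * (1-x) ^ (q-1)) =ᵐ[volume.restrict (Ioo (0:ℝ) 1)]
      fun x => ((x:ℂ) ^ ((p:ℂ)-1) * (1-(x:ℂ)) ^ ((q:ℂ)-1)).re := by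
    refine (ae_restrict_iff' measurableSet_Ioo).2 (Filter.Eventually.of_forall fun x hx => ?_)
    simp only [← hc x hx, Complex.ofReal_re]
  constructor
  · exact (hF.re).congr heq.symm
  · have h1' : ∫ x in Ioo (0:ℝ) 1, ((x ^ (p-1) * (1-x) ^ (q-1) : ℝ) : ℂ)
        = ((∫ x in Ioo (0:ℝ) 1, x ^ (p-1) * (1-x) ^ (q-1) : ℝ) : ℂ) := integral_ofReal
    have h1 : ((∫ x in Ioo (0:ℝ) 1, x ^ (p-1) * (1-x) ^ (q-1) : ℝ) : ℂ)
        = ∫ x in Ioo (0:ℝ) 1, (x:ℂ) ^ ((p:ℂ)-1) * (1-(x:ℂ)) ^ ((q:ℂ)-1) :=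
      h1'.symm.trans (setIntegral_congr_fun measurableSet_Ioo hc)
    have h2 : ∫ x in Ioo (0:ℝ) 1, (x:ℂ) ^ ((p:ℂ)-1) * (1-(x:ℂ)) ^ ((q:ℂ)-1)
        = Complex.betaIntegral p q := by
      rw [Complex.betaIntegral, intervalIntegral.integral_of_le zero_le_one,
        ← integral_Ioc_eq_integral_Ioo]
    have h3 : Complex.Gamma p * Complex.Gamma q
        = Complex.Gamma (p+q) * Complex.betaIntegral p q := by
      have := Complex.Gamma_mul_Gamma_eq_betaIntegral (s := p) (t := q)
        (by simpa using hp) (by simpa using hq)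
      simpa using this
    have hne : Real.Gamma (p+q) ≠ 0 := (Real.Gamma_pos_of_pos (by linarith)).ne'
    have hbeta : Complex.betaIntegral p q
        = ((Real.Gamma p * Real.Gamma q / Real.Gamma (p+q) : ℝ) : ℂ) := by
      have hne' : Complex.Gamma ((p:ℂ)+(q:ℂ)) ≠ 0 := by
        rw [← Complex.ofReal_add, Complex.Gamma_ofReal]
        simpa using hne
      rw [Complex.ofReal_div, Complex.ofReal_mul, ← Complex.Gamma_ofReal,
        ← Complex.Gamma_ofReal, ← Complex.Gamma_ofReal, Complex.ofReal_add,
        eq_div_iff hne', h3]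
      ring
    rw [← Complex.ofReal_inj, h1, h2, hbeta]


lemma substIoi : (fun x : ℝ => x / (1 - x)) '' Ioo (0:ℝ) 1 = Ioi (0:ℝ) := by
  ext y
  constructor
  · rintro ⟨x, hx, rfl⟩
    exact div_pos hx.1 (by linarith [hx.2])
  · intro hy
    have hy' : (0:ℝ) < y := hy
    refine ⟨y / (1 + y), ⟨div_pos hy' (by linarith), ?_⟩, ?_⟩
    · rw [div_lt_one (by linarith)]; linarith
    · have h : (1:ℝ) - y/(1+y) = 1/(1+y) := by
        rw [one_sub_div (by linarith : (1:ℝ)+y ≠ 0)]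
        norm_num
      simp only [h]
      field_simp
lemma substInj : InjOn (fun x : ℝ => x / (1 - x)) (Ioo (0:ℝ) 1) := by
  intro a ha b hb h
  simp only at h
  have h1 : (1:ℝ) - a ≠ 0 := by have := ha.2; intro h'; linarith
  have h2 : (1:ℝ) - b ≠ 0 := by have := hb.2; intro h'; linarith
  field_simp at h
  linarith

lemma substDeriv {x : ℝ} (hx : x ∈ Ioo (0:ℝ) 1) :
    HasDerivWithinAt (fun x : ℝ => x / (1 - x)) (((1-x)^2)⁻¹) (Ioo (0:ℝ) 1) x := by
  have h1 : (1:ℝ) - x ≠ 0 := by have := hx.2; intro h'; linarith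
  have := (hasDerivAt_id x).div ((hasDerivAt_const x 1).sub (hasDerivAt_id x)) h1
  refine this.hasDerivWithinAt.congr_deriv ?_
  show (1 * (1 - x) - x * (0 - 1)) / (1 - x) ^ 2 = ((1 - x) ^ 2)⁻¹
  ring

lemma key_pt {p q x : ℝ} (hx : x ∈ Ioo (0:ℝ) 1) :
    |((1-x)^2)⁻¹| • ((x/(1-x)) ^ (p-1) * (1 + x/(1-x)) ^ (-(p+q)))
      = x ^ (p-1) * (1-x) ^ (q-1) := by
  have ha : (0:ℝ) < x := hx.1
  have hb : (0:ℝ) < 1 - x := by linarith [hx.2]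
  have h1 : 1 + x/(1-x) = (1-x)⁻¹ := by field_simp; ring
  rw [h1, smul_eq_mul, abs_of_pos (by positivity), Real.div_rpow ha.le hb.le,
    Real.inv_rpow hb.le, ← Real.rpow_neg hb.le, neg_neg,
    ← Real.rpow_natCast (1-x) 2, ← Real.rpow_neg hb.le,
    div_eq_mul_inv, ← Real.rpow_neg hb.le]
  have e1 : ((1-x):ℝ) ^ (-((2:ℕ):ℝ)) * (1-x) ^ (-(p-1)) * (1-x) ^ (p+q)
      = (1-x) ^ (q-1) := by
    rw [← Real.rpow_add hb, ← Real.rpow_add hb]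
    congr 1
    push_cast
    ring
  rw [← e1]
  ring

lemma betaIoi (p q : ℝ) (hp : 0 < p) (hq : 0 < q) :
    IntegrableOn (fun y : ℝ => y ^ (p-1) * (1+y) ^ (-(p+q))) (Ioi (0:ℝ)) ∧
    ∫ y in Ioi (0:ℝ), y ^ (p-1) * (1+y) ^ (-(p+q))
      = Real.Gamma p * Real.Gamma q / Real.Gamma (p+q) := by
  have hbeta := betaReal p q hp hq
  have hint := integrableOn_image_iff_integrableOn_abs_deriv_smul measurableSet_Ioo
    (fun x hx => substDeriv hx) substInj
    (fun y : ℝ => y ^ (p-1) * (1+y) ^ (-(p+q)))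
  have hval := integral_image_eq_integral_abs_deriv_smul measurableSet_Ioo
    (fun x hx => substDeriv hx) substInj
    (fun y : ℝ => y ^ (p-1) * (1+y) ^ (-(p+q)))
  rw [substIoi] at hint hval
  constructor
  · rw [hint]
    exact hbeta.1.congr_fun (fun x hx => (key_pt (p := p) (q := q) hx).symm) measurableSet_Ioo
  · rw [hval, ← hbeta.2]
    exact setIntegral_congr_fun measurableSet_Ioo fun x hx => key_pt hx

lemma myInvImage : (fun y : ℝ => y⁻¹) '' Ioo (0:ℝ) 1 = Ioi (1:ℝ) := by
  ext z
  constructor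
  · rintro ⟨y, hy, rfl⟩
    exact (one_lt_inv_iff₀.mpr ⟨hy.1, hy.2⟩ : 1 < y⁻¹)
  · intro hz
    have hz' : (1:ℝ) < z := hz
    exact ⟨z⁻¹, ⟨inv_pos.mpr (by linarith), inv_lt_one_of_one_lt₀ hz'⟩, by simp⟩

lemma invDeriv {y : ℝ} (hy : y ∈ Ioo (0:ℝ) 1) :
    HasDerivWithinAt (fun y : ℝ => y⁻¹) (-((y^2)⁻¹)) (Ioo (0:ℝ) 1) y :=
  (hasDerivAt_inv hy.1.ne').hasDerivWithinAt

lemma invInj : InjOn (fun y : ℝ => y⁻¹) (Ioo (0:ℝ) 1) := by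
  intro a ha b hb h
  simpa using congrArg (·⁻¹) h

lemma inv_pt {p q y : ℝ} (hy : y ∈ Ioo (0:ℝ) 1) :
    |(-((y^2)⁻¹))| • ((y⁻¹) ^ (p-1) * (1+y⁻¹) ^ (-(p+q)))
      = y ^ (q-1) * (1+y) ^ (-(p+q)) := by
  have hy0 : (0:ℝ) < y := hy.1
  have h1 : 1 + y⁻¹ = (1+y)/y := by field_simp; ring
  rw [smul_eq_mul, abs_neg, abs_of_pos (by positivity), h1,
    Real.div_rpow (by positivity) hy0.le,
    Real.inv_rpow hy0.le, ← Real.rpow_neg hy0.le, div_eq_mul_inv,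
    ← Real.rpow_neg hy0.le, ← Real.rpow_natCast y 2, ← Real.rpow_neg hy0.le]
  have e1 : y ^ (-((2:ℕ):ℝ)) * y ^ (-(p-1)) * y ^ (-(-(p+q))) = y ^ (q-1) := by
    rw [← Real.rpow_add hy0, ← Real.rpow_add hy0]
    congr 1
    push_cast
    ring
  rw [← e1]
  ring

lemma splitBeta (p q : ℝ) (hp : 0 < p) (hq : 0 < q) :
    IntegrableOn (fun y : ℝ => (y ^ (p-1) + y ^ (q-1)) * (1+y) ^ (-(p+q))) (Ioo (0:ℝ) 1) ∧
    ∫ y in Ioo (0:ℝ) 1, (y ^ (p-1) + y ^ (q-1)) * (1+y) ^ (-(p+q))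
      = Real.Gamma p * Real.Gamma q / Real.Gamma (p+q) := by
  obtain ⟨hInt, hVal⟩ := betaIoi p q hp hq
  -- integrability of each piece on Ioo 0 1
  have hI1 : IntegrableOn (fun y : ℝ => y ^ (p-1) * (1+y) ^ (-(p+q))) (Ioo (0:ℝ) 1) :=
    hInt.mono_set (Ioo_subset_Ioi_self)
  have hiff := integrableOn_image_iff_integrableOn_abs_deriv_smul measurableSet_Ioo
    (fun y hy => invDeriv hy) invInj (fun y : ℝ => y ^ (p-1) * (1+y) ^ (-(p+q)))
  rw [myInvImage] at hiff
  have hI2 : IntegrableOn (fun y : ℝ => y ^ (q-1) * (1+y) ^ (-(p+q))) (Ioo (0:ℝ) 1) := by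
    have := hiff.mp (hInt.mono_set (Ioi_subset_Ioi (by norm_num)))
    exact this.congr_fun (fun y hy => inv_pt hy) measurableSet_Ioo
  have hval2 : ∫ y in Ioi (1:ℝ), y ^ (p-1) * (1+y) ^ (-(p+q))
      = ∫ y in Ioo (0:ℝ) 1, y ^ (q-1) * (1+y) ^ (-(p+q)) := by
    have h := integral_image_eq_integral_abs_deriv_smul measurableSet_Ioo
      (fun y hy => invDeriv hy) invInj (fun y : ℝ => y ^ (p-1) * (1+y) ^ (-(p+q)))
    rw [myInvImage] at h
    rw [h]
    exact setIntegral_congr_fun measurableSet_Ioo fun y hy => inv_pt hy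
  have hU : Ioo (0:ℝ) 1 ∪ Ici 1 = Ioi (0:ℝ) := by
    ext x
    simp only [mem_union, mem_Ioo, mem_Ici, mem_Ioi]
    constructor
    · rintro (⟨h1, h2⟩ | h1) <;> linarith
    · intro h
      rcases lt_or_ge x 1 with h'|h'
      · exact Or.inl ⟨h, h'⟩
      · exact Or.inr h'
  constructor
  · have hadd : IntegrableOn (fun y : ℝ => y ^ (p-1) * (1+y) ^ (-(p+q))
        + y ^ (q-1) * (1+y) ^ (-(p+q))) (Ioo (0:ℝ) 1) := hI1.add hI2
    exact hadd.congr_fun (fun y hy => by ring) measurableSet_Ioo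
  · have hdisj : Disjoint (Ioo (0:ℝ) 1) (Ici (1:ℝ)) := by
      rw [disjoint_left]
      intro a ha hb
      exact absurd ha.2 (not_lt.mpr hb)
    have hsplit : ∫ y in Ioi (0:ℝ), y ^ (p-1) * (1+y) ^ (-(p+q))
        = (∫ y in Ioo (0:ℝ) 1, y ^ (p-1) * (1+y) ^ (-(p+q)))
          + ∫ y in Ici (1:ℝ), y ^ (p-1) * (1+y) ^ (-(p+q)) := by
      rw [← hU, setIntegral_union hdisj measurableSet_Ici hI1
        (hInt.mono_set (hU ▸ subset_union_right))]
    rw [hsplit, integral_Ici_eq_integral_Ioi, hval2] at hVal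
    rw [← hVal]
    rw [← integral_add hI1 hI2]
    exact setIntegral_congr_fun measurableSet_Ioo fun y hy => by ring

lemma negLogImage : (fun y : ℝ => -Real.log y) '' Ioo (0:ℝ) 1 = Ioi (0:ℝ) := by
  ext t
  constructor
  · rintro ⟨y, hy, rfl⟩
    have : Real.log y < 0 := Real.log_neg hy.1 hy.2
    simp only [mem_Ioi]
    linarith
  · intro ht
    have ht' : (0:ℝ) < t := ht
    refine ⟨Real.exp (-t), ⟨Real.exp_pos _, ?_⟩, by simp [Real.log_exp]⟩
    rw [Real.exp_lt_one_iff]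
    linarith

lemma negLogDeriv {y : ℝ} (hy : y ∈ Ioo (0:ℝ) 1) :
    HasDerivWithinAt (fun y : ℝ => -Real.log y) (-(y⁻¹)) (Ioo (0:ℝ) 1) y :=
  ((Real.hasDerivAt_log hy.1.ne').neg).hasDerivWithinAt

lemma negLogInj : InjOn (fun y : ℝ => -Real.log y) (Ioo (0:ℝ) 1) := by
  intro a ha b hb h
  exact Real.log_injOn_pos (mem_Ioi.mpr ha.1) (mem_Ioi.mpr hb.1) (neg_injective h)

lemma log_pt {s ν y : ℝ} (hy : y ∈ Ioo (0:ℝ) 1) :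
    |(-(y⁻¹))| • (Real.cosh (ν * (-Real.log y)) * (1 + Real.cosh (-Real.log y)) ^ (-s))
      = 2 ^ (s-1) * ((y ^ ((s-ν)-1) + y ^ ((s+ν)-1)) * (1+y) ^ (-((s-ν)+(s+ν)))) := by
  have hy0 : (0:ℝ) < y := hy.1
  have h1y : (0:ℝ) < 1 + y := by linarith [hy.1]
  have hc1 : Real.cosh (-Real.log y) = (y + y⁻¹)/2 := by
    rw [Real.cosh_neg, Real.cosh_log hy0]
  have hc2 : Real.cosh (ν * (-Real.log y)) = (y ^ ν + y ^ (-ν))/2 := by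
    rw [Real.cosh_eq, Real.rpow_def_of_pos hy0, Real.rpow_def_of_pos hy0]
    rw [show ν * -Real.log y = Real.log y * (-ν) by ring,
      show -(Real.log y * -ν) = Real.log y * ν by ring]
    ring
  have e : 1 + (y + y⁻¹)/2 = (1+y)^2/(2*y) := by
    field_simp
    ring
  have hD : ((1+y)^2/(2*y)) ^ (-s) = 2 ^ s * y ^ s * (1+y) ^ (-(2*s)) := by
    rw [Real.div_rpow (by positivity) (by positivity)]
    have hA : ((1+y)^2 : ℝ) ^ (-s) = (1+y) ^ (-(2*s)) := by
      rw [← Real.rpow_natCast (1+y) 2, ← Real.rpow_mul h1y.le]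
      congr 1
      push_cast
      ring
    have hB : ((2*y) : ℝ) ^ (-s) = (2 ^ s * y ^ s)⁻¹ := by
      rw [Real.rpow_neg (by positivity), Real.mul_rpow (by norm_num) hy0.le]
    rw [hA, hB, div_eq_mul_inv, inv_inv]
    ring
  have t1 : y⁻¹ * y ^ s * y ^ ν = y ^ (s+ν-1) := by
    rw [← Real.rpow_neg_one y, ← Real.rpow_add hy0, ← Real.rpow_add hy0]
    congr 1
    ring
  have t2 : y⁻¹ * y ^ s * y ^ (-ν) = y ^ (s-ν-1) := by
    rw [← Real.rpow_neg_one y, ← Real.rpow_add hy0, ← Real.rpow_add hy0]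
    congr 1
    ring
  have t3 : (2:ℝ) ^ s = 2 * 2 ^ (s-1) := by
    rw [show s = 1 + (s-1) by ring, Real.rpow_add two_pos, Real.rpow_one]
    ring_nf
  rw [smul_eq_mul, abs_neg, abs_of_pos (by positivity), hc1, hc2, e, hD,
    show -((s-ν)+(s+ν)) = -(2*s) by ring,
    show ((s-ν)-1) = s-ν-1 by ring, show ((s+ν)-1) = s+ν-1 by ring]
  have expand : y⁻¹ * ((y ^ ν + y ^ (-ν))/2 * (2 ^ s * y ^ s * (1+y) ^ (-(2*s))))
      = (2:ℝ) ^ s / 2 * (1+y) ^ (-(2*s)) * (y⁻¹ * y ^ s * y ^ ν + y⁻¹ * y ^ s * y ^ (-ν)) := by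
    ring
  rw [expand, t1, t2, t3]
  ring

lemma Jval (ν s : ℝ) (h1 : 0 < s + ν) (h2 : 0 < s - ν) :
    IntegrableOn (fun t : ℝ => Real.cosh (ν*t) * (1+Real.cosh t) ^ (-s)) (Ioi (0:ℝ)) ∧
    ∫ t in Ioi (0:ℝ), Real.cosh (ν*t) * (1+Real.cosh t) ^ (-s)
      = 2 ^ (s-1) * (Real.Gamma (s-ν) * Real.Gamma (s+ν) / Real.Gamma (2*s)) := by
  obtain ⟨hSI, hSV⟩ := splitBeta (s-ν) (s+ν) h2 h1
  have hgam : Real.Gamma ((s-ν)+(s+ν)) = Real.Gamma (2*s) := by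
    congr 1
    ring
  have hiff := integrableOn_image_iff_integrableOn_abs_deriv_smul measurableSet_Ioo
    (fun y hy => negLogDeriv hy) negLogInj
    (fun t : ℝ => Real.cosh (ν*t) * (1+Real.cosh t) ^ (-s))
  have hval := integral_image_eq_integral_abs_deriv_smul measurableSet_Ioo
    (fun y hy => negLogDeriv hy) negLogInj
    (fun t : ℝ => Real.cosh (ν*t) * (1+Real.cosh t) ^ (-s))
  rw [negLogImage] at hiff hval
  constructor
  · rw [hiff]
    have : IntegrableOn (fun y : ℝ => 2 ^ (s-1) *
        ((y ^ ((s-ν)-1) + y ^ ((s+ν)-1)) * (1+y) ^ (-((s-ν)+(s+ν))))) (Ioo (0:ℝ) 1) :=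
      hSI.const_mul _
    exact this.congr_fun (fun y hy => (log_pt hy).symm) measurableSet_Ioo
  · rw [hval,
      setIntegral_congr_fun measurableSet_Ioo (fun y hy => log_pt (s := s) (ν := ν) hy),
      integral_const_mul, hSV, hgam]

lemma slice_int (s r : ℝ) (hs : 0 < s) (hr : 0 < r) :
    IntegrableOn (fun u : ℝ => u ^ (s-1) * Real.exp (-(r*u))) (Ioi (0:ℝ)) := by
  have := integrableOn_rpow_mul_exp_neg_mul_rpow (p := 1) (s := s-1) (b := r)
    (by linarith) zero_lt_one hr
  exact this.congr_fun (fun u hu => by simp only [Real.rpow_one]; ring_nf) measurableSet_Ioi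

lemma I_val (ν s : ℝ) (h1 : 0 < s + ν) (h2 : 0 < s - ν) :
    ∫ u in Ioi (0:ℝ), u ^ (s-1) * Real.exp (-u) * besselK ν u
      = Real.sqrt π * (Real.Gamma (s+ν) * Real.Gamma (s-ν))
        / (Real.Gamma (s+1/2) * 2 ^ s) := by
  have hs : 0 < s := by linarith
  set μ := volume.restrict (Ioi (0:ℝ)) with hμ
  set f : ℝ → ℝ → ℝ := fun u t =>
    u ^ (s-1) * Real.exp (-(u*(1+Real.cosh t))) * Real.cosh (ν*t) with hf
  -- measurability
  have hmeas : AEStronglyMeasurable (Function.uncurry f) (μ.prod μ) := by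
    apply Measurable.aestronglyMeasurable
    have : Measurable (Function.uncurry f) := by
      rw [hf]
      fun_prop
    exact this
  -- each t-slice (in u) is integrable
  have hslice : ∀ t : ℝ, Integrable (fun u => f u t) μ := by
    intro t
    have hr : (0:ℝ) < 1 + Real.cosh t := by positivity
    have h' : IntegrableOn (fun u : ℝ => u ^ (s-1) * Real.exp (-((1+Real.cosh t)*u))
        * Real.cosh (ν*t)) (Ioi (0:ℝ)) :=
      (slice_int s (1+Real.cosh t) hs hr).mul_const (Real.cosh (ν*t))
    exact h'.congr_fun (fun u hu => by simp only [hf]; ring_nf) measurableSet_Ioi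
  -- value of each t-slice
  have hsliceval : ∀ t : ℝ, ∫ u, f u t ∂μ
      = Real.Gamma s * (Real.cosh (ν*t) * (1+Real.cosh t) ^ (-s)) := by
    intro t
    have hr : (0:ℝ) < 1 + Real.cosh t := by positivity
    have hv := integral_rpow_mul_exp_neg_mul_Ioi hs hr
    have : ∫ u, f u t ∂μ
        = (∫ u in Ioi (0:ℝ), u ^ (s-1) * Real.exp (-((1+Real.cosh t)*u))) * Real.cosh (ν*t) := by
      rw [hμ, ← integral_mul_const]
      exact setIntegral_congr_fun measurableSet_Ioi fun u hu => by
        simp only [hf]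
        ring_nf
    rw [this, hv, one_div, ← Real.rpow_neg_one, ← Real.rpow_mul hr.le]
    norm_num
    ring
  -- product integrability
  have hprod : Integrable (Function.uncurry f) (μ.prod μ) := by
    rw [integrable_prod_iff' hmeas]
    constructor
    · exact Filter.Eventually.of_forall fun t => hslice t
    · have hJ := (Jval ν s h1 h2).1
      have hJ' : IntegrableOn (fun t : ℝ =>
          Real.Gamma s * (Real.cosh (ν*t) * (1+Real.cosh t) ^ (-s))) (Ioi (0:ℝ)) :=
        hJ.const_mul _
      refine hJ'.congr_fun (fun t ht => ?_) measurableSet_Ioi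
      beta_reduce
      rw [← hsliceval t]
      refine setIntegral_congr_fun measurableSet_Ioi fun u hu => ?_
      have hu' : (0:ℝ) < u := hu
      have hnn : 0 ≤ f u t := by
        simp only [hf]
        have := Real.cosh_pos (x := ν*t)
        positivity
      exact ((Real.norm_eq_abs _).trans (abs_of_nonneg hnn)).symm
  have hswap := integral_integral_swap hprod
  have hL : (∫ u, (∫ t, f u t ∂μ) ∂μ)
      = ∫ u in Ioi (0:ℝ), u ^ (s-1) * Real.exp (-u) * besselK ν u := by
    refine setIntegral_congr_fun measurableSet_Ioi fun u hu => ?_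
    calc ∫ t, f u t ∂μ
        = ∫ t in Ioi (0:ℝ), (u ^ (s-1) * Real.exp (-u))
            * (Real.exp (-u * Real.cosh t) * Real.cosh (ν*t)) := by
          refine setIntegral_congr_fun measurableSet_Ioi fun t ht => ?_
          simp only [hf]
          rw [show -(u*(1+Real.cosh t)) = -u + -u * Real.cosh t by ring, Real.exp_add]
          ring
      _ = u ^ (s-1) * Real.exp (-u) * besselK ν u := by
          rw [integral_const_mul, besselK]
  have hR : (∫ t, (∫ u, f u t ∂μ) ∂μ)
      = Real.Gamma s * (2 ^ (s-1)
          * (Real.Gamma (s-ν) * Real.Gamma (s+ν) / Real.Gamma (2*s))) := by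
    calc ∫ t, (∫ u, f u t ∂μ) ∂μ
        = ∫ t in Ioi (0:ℝ), Real.Gamma s * (Real.cosh (ν*t) * (1+Real.cosh t) ^ (-s)) :=
          setIntegral_congr_fun measurableSet_Ioi fun t ht => hsliceval t
      _ = _ := by rw [integral_const_mul, (Jval ν s h1 h2).2]
  rw [← hL, hswap, hR]
  -- final Gamma algebra via duplication formula
  have dup := Real.Gamma_mul_Gamma_add_half s
  have hpow : (2:ℝ) ^ (s-1) * 2 ^ s = 2 ^ (2*s-1) := by
    rw [← Real.rpow_add two_pos]
    congr 1
    ring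
  have hpow2 : (2:ℝ) ^ (2*s-1) * 2 ^ (1-2*s) = 1 := by
    rw [← Real.rpow_add two_pos]
    norm_num
  have hΓ2s : 0 < Real.Gamma (2*s) := Real.Gamma_pos_of_pos (by linarith)
  have hΓh : 0 < Real.Gamma (s+1/2) := Real.Gamma_pos_of_pos (by linarith)
  rw [eq_div_iff (by positivity)]
  have key : Real.Gamma s * (2 ^ (s-1)
        * (Real.Gamma (s-ν) * Real.Gamma (s+ν) / Real.Gamma (2*s)))
        * (Real.Gamma (s+1/2) * 2 ^ s)
      = (Real.Gamma s * Real.Gamma (s+1/2)) * ((2:ℝ) ^ (s-1) * 2 ^ s)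
        * (Real.Gamma (s-ν) * Real.Gamma (s+ν)) / Real.Gamma (2*s) := by
    ring
  rw [key, div_eq_iff hΓ2s.ne']
  linear_combination ((2:ℝ)^(s-1) * (2:ℝ)^s * (Real.Gamma (s-ν) * Real.Gamma (s+ν))) * dup
    + (Real.Gamma (2*s) * ((2:ℝ)^(1-2*s)) * Real.sqrt π
        * (Real.Gamma (s-ν) * Real.Gamma (s+ν))) * hpow
    + (Real.Gamma (2*s) * Real.sqrt π * (Real.Gamma (s-ν) * Real.Gamma (s+ν))) * hpow2

lemma sqImage : (fun x : ℝ => x^2) '' Ioi (0:ℝ) = Ioi (0:ℝ) := by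
  ext u
  constructor
  · rintro ⟨x, hx, rfl⟩
    have hx' : (0:ℝ) < x := hx
    exact mem_Ioi.mpr (by positivity)
  · intro hu
    have hu' : (0:ℝ) < u := hu
    exact ⟨Real.sqrt u, mem_Ioi.mpr (Real.sqrt_pos.mpr hu'), Real.sq_sqrt hu'.le⟩

lemma sqDeriv {x : ℝ} (hx : x ∈ Ioi (0:ℝ)) :
    HasDerivWithinAt (fun x : ℝ => x^2) (2*x) (Ioi (0:ℝ)) x := by
  simpa using ((hasDerivAt_pow 2 x).hasDerivWithinAt (s := Ioi 0))

lemma sqInj : InjOn (fun x : ℝ => x^2) (Ioi (0:ℝ)) := by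
  intro a ha b hb h
  have ha' : (0:ℝ) < a := ha
  have hb' : (0:ℝ) < b := hb
  have h' : a^2 = b^2 := h
  have h3 : (a-b)*(a+b) = 0 := by linear_combination h'
  rcases mul_eq_zero.mp h3 with h4 | h4
  · linarith
  · linarith

lemma alg_final (γ1 γ2 γ3 p1 p2 p3 sp t u : ℝ) (h1 : γ1 ≠ 0) (h2 : γ2 ≠ 0) (h3 : γ3 ≠ 0)
    (h4 : p3 ≠ 0) (h5 : sp ≠ 0) (h6 : t ≠ 0) (h7 : u ≠ 0) :
    γ3 * t / (sp * γ1 * γ2) * (sp * (γ1 * p1 * (γ2 * p2)) / (γ3 * p3 * (t * u)))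
      = p1 * p2 / (u * p3) := by
  field_simp


/-- For the weight C e^{-t²}K_ν(t²)|t|^{2μ-1} on ℝ with
C = Γ(μ+1/2)2^μ/(√π Γ(μ+ν)Γ(μ-ν)), the even moments are
μ_{2n} = (μ+ν)_n(μ-ν)_n/(2^n(μ+1/2)_n), hence
x_n = (μ+ν+n-1)(μ-ν+n-1)/(2(μ+n-1/2)). -/
theorem bessel_weight_moments
    (m ν : ℝ) (h1 : 0 < m + ν) (h2 : 0 < m - ν)
    (M : ℕ → ℝ)
    (hM : ∀ n : ℕ, M n = ∫ t : ℝ,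
      t ^ (2 * n) * (Real.Gamma (m + 1/2) * (2:ℝ) ^ m
        / (Real.sqrt π * Real.Gamma (m + ν) * Real.Gamma (m - ν))
        * Real.exp (-t ^ 2) * besselK ν (t ^ 2) * |t| ^ (2 * m - 1))) :
    (∀ n : ℕ, M n = (ascPochhammer ℝ n).eval (m + ν) * (ascPochhammer ℝ n).eval (m - ν)
        / (2 ^ n * (ascPochhammer ℝ n).eval (m + 1/2))) ∧
    (∀ n : ℕ, 1 ≤ n → M n / M (n - 1)
        = (m + ν + n - 1) * (m - ν + n - 1) / (2 * (m + n - 1/2))) := by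
  have hm : 0 < m := by linarith
  have hm2 : 0 < m + 1/2 := by linarith
  set C : ℝ := Real.Gamma (m + 1/2) * (2:ℝ) ^ m
      / (Real.sqrt π * Real.Gamma (m + ν) * Real.Gamma (m - ν)) with hC
  have main : ∀ n : ℕ, M n = (ascPochhammer ℝ n).eval (m + ν) * (ascPochhammer ℝ n).eval (m - ν)
      / (2 ^ n * (ascPochhammer ℝ n).eval (m + 1/2)) := by
    intro n
    set s : ℝ := m + n with hs
    have hn0 : (0:ℝ) ≤ (n:ℝ) := Nat.cast_nonneg n
    have hs1 : 0 < s + ν := by simp only [hs]; linarith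
    have hs2 : 0 < s - ν := by simp only [hs]; linarith
    -- step 1: reduce to integral over Ioi 0
    have step1 : M n = 2 * ∫ x in Ioi (0:ℝ),
        x ^ (2*n) * (C * Real.exp (-x^2) * besselK ν (x^2) * x ^ (2*m-1)) := by
      rw [hM n, ← integral_comp_abs (f := fun x : ℝ =>
        x ^ (2*n) * (C * Real.exp (-x^2) * besselK ν (x^2) * x ^ (2*m-1)))]
      congr 1
      ext t
      have e1 : |t| ^ (2*n) = t ^ (2*n) := by
        rw [pow_abs, abs_of_nonneg]
        rw [pow_mul]
        positivity
      have e2 : |t|^2 = t^2 := sq_abs t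
      rw [e1, e2]
    -- pull out C
    have step2 : M n = 2 * (C * ∫ x in Ioi (0:ℝ),
        x ^ (2*n) * (Real.exp (-x^2) * besselK ν (x^2) * x ^ (2*m-1))) := by
      rw [step1]
      congr 1
      rw [← integral_const_mul]
      refine setIntegral_congr_fun measurableSet_Ioi fun x hx => ?_
      ring
    -- step 3: substitution u = x^2
    have hsub := integral_image_eq_integral_abs_deriv_smul measurableSet_Ioi
      (fun x hx => sqDeriv hx) sqInj
      (fun u : ℝ => u ^ (s-1) * Real.exp (-u) * besselK ν u)
    rw [sqImage] at hsub
    have hpt : ∀ x ∈ Ioi (0:ℝ), |2*x| • ((x^2) ^ (s-1) * Real.exp (-x^2) * besselK ν (x^2))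
        = 2 * (x ^ (2*n) * (Real.exp (-x^2) * besselK ν (x^2) * x ^ (2*m-1))) := by
      intro x hx
      have hx' : (0:ℝ) < x := hx
      have ea : ((x^2 : ℝ)) ^ (s-1) = x ^ (2*s-2) := by
        rw [← Real.rpow_natCast x 2, ← Real.rpow_mul hx'.le]
        congr 1
        push_cast
        ring
      have eb : (x:ℝ) ^ (2*s-2) * x ^ ((1:ℝ)) = x ^ (2*s-1) := by
        rw [← Real.rpow_add hx']
        congr 1
        ring
      have ec : (x:ℝ) ^ (2*s-1) = x ^ (2*(n:ℝ)) * x ^ (2*m-1) := by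
        rw [← Real.rpow_add hx']
        congr 1
        simp only [hs]
        ring
      have ed : (x:ℝ) ^ (2*(n:ℝ)) = x ^ (2*n : ℕ) := by
        rw [← Real.rpow_natCast x (2*n)]
        congr 1
        push_cast
        ring
      rw [smul_eq_mul, abs_of_pos (by positivity), ea]
      have ee : (x:ℝ) ^ ((1:ℝ)) = x := Real.rpow_one x
      calc 2*x * (x ^ (2*s-2) * Real.exp (-x^2) * besselK ν (x^2))
          = 2 * ((x ^ (2*s-2) * x ^ ((1:ℝ))) * Real.exp (-x^2) * besselK ν (x^2)) := by
            rw [ee]; ring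
        _ = 2 * (x ^ (2*n : ℕ) * (Real.exp (-x^2) * besselK ν (x^2) * x ^ (2*m-1))) := by
            rw [eb, ec, ed]; ring
    have step3 : ∫ u in Ioi (0:ℝ), u ^ (s-1) * Real.exp (-u) * besselK ν u
        = 2 * ∫ x in Ioi (0:ℝ),
            x ^ (2*n) * (Real.exp (-x^2) * besselK ν (x^2) * x ^ (2*m-1)) := by
      rw [hsub, ← integral_const_mul]
      exact setIntegral_congr_fun measurableSet_Ioi hpt
    have hMn : M n = C * ∫ u in Ioi (0:ℝ), u ^ (s-1) * Real.exp (-u) * besselK ν u := by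
      rw [step2, step3]
      ring
    rw [hMn, I_val ν s hs1 hs2]
    -- final algebra
    have g1 : Real.Gamma (s+ν) = Real.Gamma (m+ν) * (ascPochhammer ℝ n).eval (m+ν) := by
      rw [show s+ν = (m+ν)+(n:ℝ) by simp only [hs]; ring]
      exact poch_gamma _ h1 n
    have g2 : Real.Gamma (s-ν) = Real.Gamma (m-ν) * (ascPochhammer ℝ n).eval (m-ν) := by
      rw [show s-ν = (m-ν)+(n:ℝ) by simp only [hs]; ring]
      exact poch_gamma _ h2 n
    have g3 : Real.Gamma (s+1/2) = Real.Gamma (m+1/2) * (ascPochhammer ℝ n).eval (m+1/2) := by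
      rw [show s+1/2 = (m+1/2)+(n:ℝ) by simp only [hs]; ring]
      exact poch_gamma _ hm2 n
    have g4 : (2:ℝ) ^ s = 2 ^ m * 2 ^ (n:ℕ) := by
      rw [hs, Real.rpow_add two_pos, Real.rpow_natCast]
    have hπ : (0:ℝ) < Real.sqrt π := Real.sqrt_pos.mpr Real.pi_pos
    have hγ1 : 0 < Real.Gamma (m+ν) := Real.Gamma_pos_of_pos h1
    have hγ2 : 0 < Real.Gamma (m-ν) := Real.Gamma_pos_of_pos h2
    have hγ3 : 0 < Real.Gamma (m+1/2) := Real.Gamma_pos_of_pos hm2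
    have hp3 : 0 < (ascPochhammer ℝ n).eval (m+1/2) := poch_pos _ hm2 n
    have h2m : (0:ℝ) < 2 ^ m := Real.rpow_pos_of_pos two_pos m
    have h2n : (0:ℝ) < 2 ^ (n:ℕ) := by positivity
    rw [hC, g1, g2, g3, g4]
    exact alg_final _ _ _ _ _ _ _ _ _ hγ1.ne' hγ2.ne' hγ3.ne' hp3.ne' hπ.ne' h2m.ne' h2n.ne'
  refine ⟨main, fun n hn => ?_⟩
  obtain ⟨k, rfl⟩ : ∃ k, n = k + 1 := ⟨n - 1, (Nat.succ_pred_eq_of_pos hn).symm⟩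
  have hk : k + 1 - 1 = k := rfl
  rw [main (k+1), hk, main k]
  have hp1 := poch_pos (m+ν) h1 k
  have hp2 := poch_pos (m-ν) h2 k
  have hp3 := poch_pos (m+1/2) hm2 k
  have h2k : (0:ℝ) < 2 ^ k := by positivity
  have e1 : ∀ x : ℝ, (ascPochhammer ℝ (k+1)).eval x = (ascPochhammer ℝ k).eval x * (x + k) := by
    intro x
    rw [ascPochhammer_succ_right]
    simp [Polynomial.eval_mul]
  have hms : (0:ℝ) < m + 1/2 + k := by positivity
  have hMk : (0:ℝ) < (ascPochhammer ℝ k).eval (m+ν) * (ascPochhammer ℝ k).eval (m-ν)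
      / (2 ^ k * (ascPochhammer ℝ k).eval (m+1/2)) :=
    div_pos (mul_pos hp1 hp2) (mul_pos h2k hp3)
  have hrel : (ascPochhammer ℝ (k+1)).eval (m+ν) * (ascPochhammer ℝ (k+1)).eval (m-ν)
      / (2 ^ (k+1) * (ascPochhammer ℝ (k+1)).eval (m+1/2))
      = ((ascPochhammer ℝ k).eval (m+ν) * (ascPochhammer ℝ k).eval (m-ν)
          / (2 ^ k * (ascPochhammer ℝ k).eval (m+1/2)))
        * ((m+ν+k) * (m-ν+k) / (2*(m+1/2+k))) := by
    rw [e1, e1, e1, div_mul_div_comm]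
    congr 1
    · ring
    · rw [pow_succ]
      ring
  rw [hrel, mul_comm, mul_div_assoc, div_self hMk.ne', mul_one]
  push_cast
  ring
end

section
/- Let μ be an even probability measure on ℝ with infinite support and finite moments, x_n = μ_{2n}/μ_{2n-2}. Then the nonlinear inequality 2 x_{n+1} x_{n+2} x_{n+3} + x_{n+2} x_{n+3} x_{n+4} > x_{n+1} x_{n+2}² + x_{n+2} x_{n+3}² + x_{n+1} x_{n+3} x_{n+4} holds for all n ≥ 0. -/
open MeasureTheory Polynomial
open scoped ENNReal

/-- Positivity of the Hankel quadratic form. -/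
 lemma quad_int_pos (μ : Measure ℝ) [IsProbabilityMeasure μ]
    (hinf : ∀ s : Finset ℝ, μ ((s : Set ℝ))ᶜ ≠ 0)
    (hint : ∀ n : ℕ, Integrable (fun t : ℝ => t ^ (2 * n)) μ)
    (n : ℕ) (v : Fin 3 → ℝ) (hv : v ≠ 0) :
    0 < ∫ t : ℝ, t ^ (2 * n) * (v 0 + v 1 * t ^ 2 + v 2 * t ^ 4) ^ 2 ∂μ := by
  set f : ℝ → ℝ := fun t => t ^ (2 * n) * (v 0 + v 1 * t ^ 2 + v 2 * t ^ 4) ^ 2 with hf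
  have hnonneg : ∀ t, 0 ≤ f t := fun t =>
    mul_nonneg (Even.pow_nonneg (even_two_mul n) t) (sq_nonneg _)
  have hfi : Integrable f μ := by
    have : f = fun t : ℝ => (v 0 ^ 2) * t ^ (2 * n) + (2 * (v 0 * v 1)) * t ^ (2 * (n + 1))
        + (v 1 ^ 2 + 2 * (v 0 * v 2)) * t ^ (2 * (n + 2)) + (2 * (v 1 * v 2)) * t ^ (2 * (n + 3))
        + (v 2 ^ 2) * t ^ (2 * (n + 4)) := by
      funext t; simp only [hf]; ring
    rw [this]
    exact ((((((hint n).const_mul _).add ((hint (n+1)).const_mul _)).add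
      ((hint (n+2)).const_mul _)).add ((hint (n+3)).const_mul _)).add ((hint (n+4)).const_mul _))
  rw [integral_pos_iff_support_of_nonneg hnonneg hfi]
  set P : ℝ[X] := C (v 0) + C (v 1) * X ^ 2 + C (v 2) * X ^ 4 with hP
  have hPne : P ≠ 0 := by
    intro h
    apply hv
    have h0 : P.coeff 0 = 0 := by rw [h]; simp
    have h2 : P.coeff 2 = 0 := by rw [h]; simp
    have h4 : P.coeff 4 = 0 := by rw [h]; simp
    simp only [hP, coeff_add, coeff_C, coeff_C_mul, coeff_X_pow] at h0 h2 h4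
    norm_num at h0 h2 h4
    funext i; fin_cases i <;> simp [h0, h2, h4]
  set Q : ℝ[X] := X ^ (2 * n) * P ^ 2 with hQ
  have hQne : Q ≠ 0 := mul_ne_zero (pow_ne_zero _ X_ne_zero) (pow_ne_zero _ hPne)
  have hfin := Polynomial.finite_setOf_isRoot hQne
  have hsub : ((hfin.toFinset : Set ℝ))ᶜ ⊆ Function.support f := by
    intro t ht
    simp only [Set.mem_compl_iff, Set.Finite.coe_toFinset, Set.mem_setOf_eq, IsRoot] at ht
    have : Q.eval t = f t := by
      simp only [hQ, hP, hf, eval_mul, eval_pow, eval_add, eval_C, eval_X]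
    intro h0
    exact ht (by rw [this, h0])
  calc (0:ℝ≥0∞) < μ ((hfin.toFinset : Set ℝ))ᶜ := pos_iff_ne_zero.mpr (hinf _)
    _ ≤ μ (Function.support f) := measure_mono hsub

/-- The nonlinear inequality
2x_{n+1}x_{n+2}x_{n+3} + x_{n+2}x_{n+3}x_{n+4}
  > x_{n+1}x_{n+2}² + x_{n+2}x_{n+3}² + x_{n+1}x_{n+3}x_{n+4}
for the moment ratios of an even probability measure with infinite support. -/
theorem moment_ratio_hankel_inequality
    (μ : Measure ℝ) [IsProbabilityMeasure μ]
    (heven : Measure.map (fun t : ℝ => -t) μ = μ)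
    (hinf : ∀ s : Finset ℝ, μ ((s : Set ℝ))ᶜ ≠ 0)
    (hint : ∀ n : ℕ, Integrable (fun t : ℝ => t ^ (2 * n)) μ)
    (M : ℕ → ℝ) (hM : ∀ n : ℕ, M n = ∫ t : ℝ, t ^ (2 * n) ∂μ)
    (x : ℕ → ℝ) (hx : ∀ n : ℕ, 1 ≤ n → x n = M n / M (n - 1)) :
    ∀ n : ℕ, 2 * x (n+1) * x (n+2) * x (n+3) + x (n+2) * x (n+3) * x (n+4)
      > x (n+1) * x (n+2) ^ 2 + x (n+2) * x (n+3) ^ 2 + x (n+1) * x (n+3) * x (n+4) := by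
  intro n
  -- positivity of moments
  have Mpos : ∀ k : ℕ, 0 < M k := by
    intro k
    have hv : (![1,0,0] : Fin 3 → ℝ) ≠ 0 := by
      intro h; have := congrFun h 0; simp at this
    have h := quad_int_pos μ hinf hint k ![1,0,0] hv
    have he : (fun t : ℝ => t ^ (2*k) * ((![1,0,0] : Fin 3 → ℝ) 0
        + (![1,0,0] : Fin 3 → ℝ) 1 * t ^ 2 + (![1,0,0] : Fin 3 → ℝ) 2 * t ^ 4) ^ 2)
        = fun t : ℝ => t ^ (2*k) := by
      funext t; simp
    rw [he] at h
    rw [hM]; exact h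
  -- expansion of the quadratic form
  have expand : ∀ (v : Fin 3 → ℝ),
      (∫ t : ℝ, t ^ (2 * n) * (v 0 + v 1 * t ^ 2 + v 2 * t ^ 4) ^ 2 ∂μ)
      = v 0 ^ 2 * M n + 2 * (v 0 * v 1) * M (n+1) + (v 1 ^ 2 + 2 * (v 0 * v 2)) * M (n+2)
        + 2 * (v 1 * v 2) * M (n+3) + v 2 ^ 2 * M (n+4) := by
    intro v
    have he : (fun t : ℝ => t ^ (2 * n) * (v 0 + v 1 * t ^ 2 + v 2 * t ^ 4) ^ 2)
        = fun t : ℝ => (v 0 ^ 2) * t ^ (2 * n) + (2 * (v 0 * v 1)) * t ^ (2 * (n + 1))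
        + ((v 1 ^ 2 + 2 * (v 0 * v 2))) * t ^ (2 * (n + 2)) + (2 * (v 1 * v 2)) * t ^ (2 * (n + 3))
        + (v 2 ^ 2) * t ^ (2 * (n + 4)) := by
      funext t; ring
    rw [he, integral_add, integral_add, integral_add, integral_add]
    · simp only [integral_const_mul, hM]
    all_goals
      first
      | exact (hint _).const_mul _
      | exact ((hint _).const_mul _).add ((hint _).const_mul _)
      | exact (((hint _).const_mul _).add ((hint _).const_mul _)).add ((hint _).const_mul _)
      | exact ((((hint _).const_mul _).add ((hint _).const_mul _)).add
          ((hint _).const_mul _)).add ((hint _).const_mul _)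
  -- the Hankel matrix
  set H : Matrix (Fin 3) (Fin 3) ℝ := Matrix.of fun i j : Fin 3 => M (n + (i:ℕ) + (j:ℕ)) with hH
  have hpd : H.PosDef := by
    refine Matrix.PosDef.of_dotProduct_mulVec_pos ?_ ?_
    · rw [Matrix.IsHermitian]
      ext i j
      simp only [Matrix.conjTranspose_apply, hH, Matrix.of_apply, star_trivial]
      congr 1; omega
    · intro v hv
      have h := quad_int_pos μ hinf hint n v hv
      rw [expand v] at h
      have h2 : dotProduct (star v) (H.mulVec v) = v 0 ^ 2 * M n + 2 * (v 0 * v 1) * M (n+1)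
          + (v 1 ^ 2 + 2 * (v 0 * v 2)) * M (n+2) + 2 * (v 1 * v 2) * M (n+3)
          + v 2 ^ 2 * M (n+4) := by
        simp only [dotProduct, Matrix.mulVec, Fin.sum_univ_three, hH, Matrix.of_apply,
          star_trivial, Pi.star_apply, Fin.val_zero, Fin.val_one, Fin.val_two]
        norm_num
        ring_nf
      rw [h2]; exact h
  have hdet := hpd.det_pos
  rw [Matrix.det_fin_three] at hdet
  simp only [hH, Matrix.of_apply, Fin.val_zero, Fin.val_one, Fin.val_two] at hdet
  norm_num at hdet
  simp only [show n+1+1=n+2 by omega, show n+1+2=n+3 by omega, show n+2+1=n+3 by omega,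
    show n+2+2=n+4 by omega] at hdet
  have h0 := Mpos n
  have h1 := Mpos (n+1)
  have h2 := Mpos (n+2)
  have h3 := Mpos (n+3)
  have h4 := Mpos (n+4)
  rw [hx (n+1) (by omega), hx (n+2) (by omega), hx (n+3) (by omega), hx (n+4) (by omega)]
  simp only [Nat.add_sub_cancel, show n+2-1 = n+1 by omega, show n+3-1 = n+2 by omega,
    show n+4-1 = n+3 by omega]
  set a := M n
  set b := M (n+1)
  set c := M (n+2)
  set d := M (n+3)
  set e := M (n+4)
  rw [gt_iff_lt, ← sub_pos]
  have key : 2 * (b/a) * (c/b) * (d/c) + (c/b) * (d/c) * (e/d)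
      - ((b/a) * (c/b)^2 + (c/b) * (d/c)^2 + (b/a) * (d/c) * (e/d))
      = (a*c*e - a*d*d - b*b*e + b*d*c + c*b*d - c*c*c) / (a*b*c) := by
    field_simp
    ring
  rw [key]
  apply div_pos (by nlinarith [hdet]) (by positivity)
end
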